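/- Let k ≥ 1, let q be a prime with q ≤ p_k, and let a, g, m be integers with a ≥ 1, g ≥ 1, m ≥ 0. If gcd(a + i·g, Π_k) = 1 for every i = 0, 1, …, m+1, and q ≤ m + 2, then q divides g. (In particular, if m+1 consecutive gaps in Δ(p_k) are all equal to g, then g ≡ 0 mod q for every prime q ≤ min(m+2, p_k).) -/

import Mathlib

/-- `nthPrime k` is the k-th prime `p_k` (1-indexed: `p_1 = 2`). -/
noncomputable def nthPrime (k : ℕ) : ℕ := Nat.nth Nat.Prime (k - 1)

/-- `primor k` is the primorial `Π_k = p_1 ⋯ p_k`. -/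
noncomputable def primor (k : ℕ) : ℕ := ∏ i ∈ Finset.range k, Nat.nth Nat.Prime i
theorem stmt_7 (k : ℕ) (hk : 1 ≤ k) (q : ℕ) (hq : Nat.Prime q) (hqk : q ≤ nthPrime k)
    (a g m : ℕ) (ha : 1 ≤ a) (hg : 1 ≤ g)
    (hcop : ∀ i : ℕ, i ≤ m + 1 → Nat.Coprime (a + i * g) (primor k))
    (hqm : q ≤ m + 2) :
    q ∣ g := by
  -- q divides the primorial
  have hinf : (setOf Nat.Prime).Infinite := Nat.infinite_setOf_prime
  have hcount : Nat.count Nat.Prime q < k := by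
    by_contra h
    push_neg at h
    have hlt : Nat.nth Nat.Prime (k - 1) < Nat.nth Nat.Prime (Nat.count Nat.Prime q) :=
      Nat.nth_strictMono hinf (by omega)
    rw [Nat.nth_count hq] at hlt
    unfold nthPrime at hqk; omega
  have hdvd : q ∣ primor k := by
    rw [primor, ← Nat.nth_count hq]
    exact Finset.dvd_prod_of_mem _ (Finset.mem_range.mpr hcount)
  -- work in ZMod q
  by_contra hqg
  haveI : Fact (Nat.Prime q) := ⟨hq⟩
  have hg0 : (g : ZMod q) ≠ 0 := by
    exact fun h0 => hqg ((ZMod.natCast_eq_zero_iff g q).mp h0)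
  set x : ZMod q := -(a : ZMod q) / (g : ZMod q) with hx
  have hiq : x.val < q := ZMod.val_lt x
  have hile : x.val ≤ m + 1 := by omega
  have hzero : ((a + x.val * g : ℕ) : ZMod q) = 0 := by
    push_cast
    rw [ZMod.natCast_val, ZMod.cast_id]
    rw [hx, div_mul_cancel₀ _ hg0]; ring
  have hdvd2 : q ∣ a + x.val * g := (ZMod.natCast_eq_zero_iff _ _).mp hzero
  have hcop' := hcop x.val hile
  have h1 : q ∣ 1 := hcop' ▸ Nat.dvd_gcd hdvd2 hdvd
  exact hq.ne_one (Nat.dvd_one.mp h1)
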